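/- Let (Ω, 𝓕, μ) be a probability space and γ > 0 a fixed constant. For each n ≥ 1, let P_n, P'_n, Q_n, Q'_n, R_n, R'_n, S_n, S'_n : Ω → M_n(ℝ) be measurable random n × n real matrices such that: (i) for μ-almost every ω, S_n(ω) and S'_n(ω) are symmetric positive semidefinite; (ii) there is a constant C with ‖Q'_n(ω)‖ ≤ C, ‖R_n(ω)‖ ≤ C, and ‖R'_n(ω)‖ ≤ C for μ-almost every ω and all n; (iii) each of ‖P_n − P'_n‖, ‖Q_n − Q'_n‖, ‖R_n − R'_n‖, ‖S_n − S'_n‖ converges to 0 in probability. Define the statistics T_n(ω) = (1/n)Tr(P_n(ω) − Q_n(ω)(S_n(ω) + γI)⁻¹R_n(ω)) and T'_n(ω) = (1/n)Tr(P'_n(ω) − Q'_n(ω)(S'_n(ω) + γI)⁻¹R'_n(ω)). Then T_n − T'_n → 0 in probability: for every ε > 0, μ{ω : |T_n(ω) − T'_n(ω)| > ε} → 0 as n → ∞. -/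

import Mathlib

open MeasureTheory Filter

/-- The `ℓ²→ℓ²` operator norm of a real `n × n` matrix. -/
noncomputable def opNorm {n : ℕ} (M : Matrix (Fin n) (Fin n) ℝ) : ℝ :=
  ‖LinearMap.toContinuousLinearMap (Matrix.toEuclideanLin M)‖

/-- Measurable structure on real matrices: the product (entrywise Borel) σ-algebra. -/
instance matrixMeasurableSpace {n : ℕ} : MeasurableSpace (Matrix (Fin n) (Fin n) ℝ) :=
  (inferInstance : MeasurableSpace (Fin n → Fin n → ℝ))

/-- The KCIT-type statistic `(1/n)Tr(P − Q(S + γI)⁻¹R)`. -/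
noncomputable def kcitStat {n : ℕ} (γ : ℝ) (P Q S R : Matrix (Fin n) (Fin n) ℝ) : ℝ :=
  (1 / (n : ℝ)) * (P - Q * (S + γ • (1 : Matrix (Fin n) (Fin n) ℝ))⁻¹ * R).trace

section Aux

open Matrix
open scoped Matrix.Norms.L2Operator

lemma opNorm_eq_l2 {n : ℕ} (M : Matrix (Fin n) (Fin n) ℝ) : opNorm M = ‖M‖ := rfl

lemma entry_le_norm {n : ℕ} (u : EuclideanSpace ℝ (Fin n)) (i : Fin n) : |u i| ≤ ‖u‖ := by
  rw [EuclideanSpace.norm_eq, ← Real.sqrt_sq_eq_abs]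
  apply Real.sqrt_le_sqrt
  have := Finset.single_le_sum (f := fun j => ‖u j‖^2) (fun j _ => by positivity)
    (Finset.mem_univ i)
  simpa [Real.norm_eq_abs, sq_abs] using this

lemma abs_trace_le {n : ℕ} (M : Matrix (Fin n) (Fin n) ℝ) : |M.trace| ≤ n * ‖M‖ := by
  have hdiag : ∀ i, |M i i| ≤ ‖M‖ := by
    intro i
    have h1 := M.l2_opNorm_mulVec ((EuclideanSpace.equiv (Fin n) ℝ).symm (Pi.single i 1))
    have hns : ‖(EuclideanSpace.equiv (Fin n) ℝ).symm (Pi.single i 1)‖ = 1 := by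
      simp [EuclideanSpace.norm_single (𝕜 := ℝ) i 1]
    rw [hns, mul_one] at h1
    refine le_trans ?_ ((entry_le_norm _ i).trans h1)
    have : ((EuclideanSpace.equiv (Fin n) ℝ).symm
        (M *ᵥ (EuclideanSpace.equiv (Fin n) ℝ).symm (Pi.single i 1)) : EuclideanSpace ℝ (Fin n)) i
        = M i i := by
      show (M *ᵥ Pi.single i 1) i = M i i
      simp [Matrix.mulVec_single]
    rw [this]
  calc |M.trace| ≤ ∑ i, |M i i| := by
        simpa [Matrix.trace, Matrix.diag] using
          Finset.abs_sum_le_sum_abs (fun i => M i i) Finset.univ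
    _ ≤ ∑ _i : Fin n, ‖M‖ := Finset.sum_le_sum fun i _ => hdiag i
    _ = n * ‖M‖ := by simp [mul_comm]

lemma shift_posDef {n : ℕ} {γ : ℝ} (hγ : 0 < γ) {S : Matrix (Fin n) (Fin n) ℝ}
    (hS : S.PosSemidef) : (S + γ • (1 : Matrix (Fin n) (Fin n) ℝ)).PosDef := by
  refine Matrix.PosDef.posSemidef_add hS (Matrix.PosDef.of_dotProduct_mulVec_pos ?_ fun x hx => ?_)
  · simp [Matrix.IsHermitian]
  · have h1 : (γ • (1 : Matrix (Fin n) (Fin n) ℝ)) *ᵥ x = γ • x := by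
      simp [Matrix.smul_mulVec]
    rw [h1]
    have hx2 : (0:ℝ) < star x ⬝ᵥ x := Matrix.dotProduct_star_self_pos_iff.mpr hx
    calc (0:ℝ) < γ * (star x ⬝ᵥ x) := mul_pos hγ hx2
      _ = star x ⬝ᵥ (γ • x) := by rw [dotProduct_smul]; simp [smul_eq_mul]

lemma shift_lower {n : ℕ} {γ : ℝ} (hγ : 0 < γ) {S : Matrix (Fin n) (Fin n) ℝ}
    (hS : S.PosSemidef) (x : EuclideanSpace ℝ (Fin n)) :
    γ * ‖x‖ ≤ ‖(Matrix.toEuclideanCLM (𝕜 := ℝ) (S + γ • 1)) x‖ := by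
  set B := S + γ • (1 : Matrix (Fin n) (Fin n) ℝ)
  set y := (Matrix.toEuclideanCLM (𝕜 := ℝ) B) x with hy
  have hinner : γ * ‖x‖^2 ≤ inner ℝ x y := by
    have hyi : ∀ i, y i = (B *ᵥ (fun j => x j)) i := fun i => rfl
    have : (inner ℝ x y : ℝ) = (fun j => x j) ⬝ᵥ (B *ᵥ (fun j => x j)) := by
      simp only [PiLp.inner_apply, RCLike.inner_apply, conj_trivial]
      simp [dotProduct, hyi, mul_comm]
    rw [this]
    have hSx : 0 ≤ (fun j => x j) ⬝ᵥ (S *ᵥ (fun j => x j)) := by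
      simpa [star_trivial] using hS.dotProduct_mulVec_nonneg (fun j => x j)
    have hxx : (fun j => x j) ⬝ᵥ (fun j => x j) = ‖x‖^2 := by
      rw [← real_inner_self_eq_norm_sq]
      simp only [PiLp.inner_apply, RCLike.inner_apply, conj_trivial, dotProduct]
    have hexp : (fun j => x j) ⬝ᵥ (B *ᵥ (fun j => x j))
        = (fun j => x j) ⬝ᵥ (S *ᵥ (fun j => x j)) + γ * ‖x‖^2 := by
      simp only [B, Matrix.add_mulVec, dotProduct_add, Matrix.smul_mulVec,
        Matrix.one_mulVec, dotProduct_smul, smul_eq_mul, hxx]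
    rw [hexp]; linarith
  have hCS : (inner ℝ x y : ℝ) ≤ ‖x‖ * ‖y‖ := real_inner_le_norm x y
  rcases eq_or_lt_of_le (norm_nonneg x) with h0 | h0
  · rw [← h0, mul_zero]; exact norm_nonneg y
  · have : γ * ‖x‖^2 ≤ ‖x‖ * ‖y‖ := le_trans hinner hCS
    nlinarith

lemma shift_inv_norm_le {n : ℕ} {γ : ℝ} (hγ : 0 < γ) {S : Matrix (Fin n) (Fin n) ℝ}
    (hS : S.PosSemidef) : ‖(S + γ • (1 : Matrix (Fin n) (Fin n) ℝ))⁻¹‖ ≤ 1/γ := by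
  set B := S + γ • (1 : Matrix (Fin n) (Fin n) ℝ)
  have hdet : IsUnit B.det := (Matrix.isUnit_iff_isUnit_det _).mp (shift_posDef hγ hS).isUnit
  have hBB : B * B⁻¹ = 1 := Matrix.mul_nonsing_inv _ hdet
  rw [Matrix.cstar_norm_def]
  refine ContinuousLinearMap.opNorm_le_bound _ (by positivity) fun v => ?_
  set x := (Matrix.toEuclideanCLM (𝕜 := ℝ) B⁻¹) v
  have hBx : (Matrix.toEuclideanCLM (𝕜 := ℝ) B) x = v := by
    have : (Matrix.toEuclideanCLM (𝕜 := ℝ) B) ((Matrix.toEuclideanCLM (𝕜 := ℝ) B⁻¹) v)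
        = (Matrix.toEuclideanCLM (𝕜 := ℝ) (B * B⁻¹)) v := by
      rw [_root_.map_mul]; rfl
    rw [this, hBB, _root_.map_one]; rfl
  have := shift_lower hγ hS x
  rw [hBx] at this
  rw [div_mul_eq_mul_div, le_div_iff₀ hγ, mul_comm]
  simpa using this

lemma trace_div_le {n : ℕ} (M : Matrix (Fin n) (Fin n) ℝ) :
    (1 / (n : ℝ)) * |M.trace| ≤ ‖M‖ := by
  rcases Nat.eq_zero_or_pos n with h | h
  · subst h; simp [norm_nonneg]
  · have hn : (0:ℝ) < n := by exact_mod_cast h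
    rw [div_mul_eq_mul_div, one_mul, div_le_iff₀ hn]
    calc |M.trace| ≤ n * ‖M‖ := abs_trace_le M
      _ = ‖M‖ * n := mul_comm _ _

lemma mul3_bound {a b c a' b' c' : ℝ} (ha : 0 ≤ a) (hb : 0 ≤ b) (hc : 0 ≤ c)
    (h1 : a ≤ a') (h2 : b ≤ b') (h3 : c ≤ c') : a * b * c ≤ a' * b' * c' :=
  mul_le_mul (mul_le_mul h1 h2 hb (ha.trans h1)) h3 hc
    (mul_nonneg (ha.trans h1) (hb.trans h2))

lemma kcit_bound {n : ℕ} {γ C : ℝ} (hγ : 0 < γ)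
    (P P' Q Q' R R' S S' : Matrix (Fin n) (Fin n) ℝ)
    (hS : S.PosSemidef) (hS' : S'.PosSemidef)
    (hQ' : ‖Q'‖ ≤ C) (hR : ‖R‖ ≤ C) :
    |kcitStat γ P Q S R - kcitStat γ P' Q' S' R'| ≤
      ‖P - P'‖ + (C/γ) * ‖Q - Q'‖ + (C^2/γ^2) * ‖S - S'‖ + (C/γ) * ‖R - R'‖ := by
  set B := S + γ • (1 : Matrix (Fin n) (Fin n) ℝ) with hBdef
  set B' := S' + γ • (1 : Matrix (Fin n) (Fin n) ℝ) with hB'def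
  have hdet : IsUnit B.det := (Matrix.isUnit_iff_isUnit_det _).mp (shift_posDef hγ hS).isUnit
  have hdet' : IsUnit B'.det := (Matrix.isUnit_iff_isUnit_det _).mp (shift_posDef hγ hS').isUnit
  set A := B⁻¹; set A' := B'⁻¹
  have hAB : A * B = 1 := Matrix.nonsing_inv_mul _ hdet
  have hB'A' : B' * A' = 1 := Matrix.mul_nonsing_inv _ hdet'
  have hAn : ‖A‖ ≤ 1/γ := shift_inv_norm_le hγ hS
  have hA'n : ‖A'‖ ≤ 1/γ := shift_inv_norm_le hγ hS'
  set D := (P - Q * A * R) - (P' - Q' * A' * R') with hDdef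
  have hTr : kcitStat γ P Q S R - kcitStat γ P' Q' S' R' = (1 / (n:ℝ)) * D.trace := by
    simp only [kcitStat, hDdef, Matrix.trace_sub]; ring
  have hmid : A * (S' - S) * A' = A - A' := by
    have h1 : S' - S = B' - B := by rw [hBdef, hB'def]; abel
    rw [h1, Matrix.mul_sub, Matrix.sub_mul, mul_assoc, hB'A', mul_one, hAB, one_mul]
  have hD : D = (P - P') - ((Q - Q') * A * R + Q' * (A * (S' - S) * A') * R
      + Q' * A' * (R - R')) := by
    rw [hmid, hDdef]; noncomm_ring
  have habs : |kcitStat γ P Q S R - kcitStat γ P' Q' S' R'| ≤ ‖D‖ := by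
    rw [hTr, abs_mul, abs_of_nonneg (by positivity : (0:ℝ) ≤ 1 / (n:ℝ))]
    exact trace_div_le D
  refine habs.trans ?_
  have hnormD : ‖D‖ ≤ ‖P - P'‖ + (‖(Q - Q') * A * R‖ + ‖Q' * (A * (S' - S) * A') * R‖
      + ‖Q' * A' * (R - R')‖) := by
    rw [hD]
    refine (norm_sub_le _ _).trans ?_
    gcongr
    exact (norm_add_le _ _).trans (by gcongr; exact norm_add_le _ _)
  refine hnormD.trans ?_
  have t1 : ‖(Q - Q') * A * R‖ ≤ (C/γ) * ‖Q - Q'‖ := by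
    refine norm_mul₃_le.trans ?_
    have h := mul3_bound (norm_nonneg (Q - Q')) (norm_nonneg A) (norm_nonneg R)
      (le_refl ‖Q - Q'‖) hAn hR
    calc ‖Q - Q'‖ * ‖A‖ * ‖R‖ ≤ ‖Q - Q'‖ * (1/γ) * C := h
      _ = (C/γ) * ‖Q - Q'‖ := by ring
  have t2 : ‖Q' * (A * (S' - S) * A') * R‖ ≤ (C^2/γ^2) * ‖S - S'‖ := by
    refine norm_mul₃_le.trans ?_
    have hmidn : ‖A * (S' - S) * A'‖ ≤ (1/γ) * ‖S - S'‖ * (1/γ) := by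
      refine norm_mul₃_le.trans ?_
      have h := mul3_bound (norm_nonneg A) (norm_nonneg (S' - S)) (norm_nonneg A')
        hAn (le_of_eq (norm_sub_rev S' S)) hA'n
      exact h
    have h2 := mul3_bound (norm_nonneg Q') (norm_nonneg (A * (S' - S) * A')) (norm_nonneg R)
      hQ' hmidn hR
    calc ‖Q'‖ * ‖A * (S' - S) * A'‖ * ‖R‖ ≤ C * ((1/γ) * ‖S - S'‖ * (1/γ)) * C := h2
      _ = (C^2/γ^2) * ‖S - S'‖ := by
          rw [div_mul_eq_mul_div]
          field_simp
  have t3 : ‖Q' * A' * (R - R')‖ ≤ (C/γ) * ‖R - R'‖ := by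
    refine norm_mul₃_le.trans ?_
    have h := mul3_bound (norm_nonneg Q') (norm_nonneg A') (norm_nonneg (R - R'))
      hQ' hA'n (le_refl ‖R - R'‖)
    calc ‖Q'‖ * ‖A'‖ * ‖R - R'‖ ≤ C * (1/γ) * ‖R - R'‖ := h
      _ = (C/γ) * ‖R - R'‖ := by ring
  linarith

end Aux

/-- Probabilistic form of the paper's Theorem 1: if the random matrices entering the KCIT
statistics are a.s. uniformly bounded where required, the `S` parts are a.s. symmetric
positive semidefinite, and each operator-norm difference is `o_p(1)`, then the difference
of the KCIT statistics is `o_p(1)`. -/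
theorem kcit_op1 {Ω : Type*} [MeasurableSpace Ω] (μ : Measure Ω)
    [IsProbabilityMeasure μ] (γ : ℝ) (hγ : 0 < γ)
    (P P' Q Q' R R' S S' : (n : ℕ) → Ω → Matrix (Fin n) (Fin n) ℝ)
    (hPmeas : ∀ n, Measurable (P n)) (hP'meas : ∀ n, Measurable (P' n))
    (hQmeas : ∀ n, Measurable (Q n)) (hQ'meas : ∀ n, Measurable (Q' n))
    (hRmeas : ∀ n, Measurable (R n)) (hR'meas : ∀ n, Measurable (R' n))
    (hSmeas : ∀ n, Measurable (S n)) (hS'meas : ∀ n, Measurable (S' n))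
    (hS_psd : ∀ n, ∀ᵐ ω ∂μ, (S n ω).PosSemidef ∧ (S' n ω).PosSemidef)
    (C : ℝ)
    (hbdd : ∀ n, ∀ᵐ ω ∂μ,
      opNorm (Q' n ω) ≤ C ∧ opNorm (R n ω) ≤ C ∧ opNorm (R' n ω) ≤ C)
    (hP : ∀ ε : ℝ, 0 < ε →
      Tendsto (fun n => μ {ω | opNorm (P n ω - P' n ω) > ε}) atTop (nhds 0))
    (hQ : ∀ ε : ℝ, 0 < ε →
      Tendsto (fun n => μ {ω | opNorm (Q n ω - Q' n ω) > ε}) atTop (nhds 0))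
    (hR : ∀ ε : ℝ, 0 < ε →
      Tendsto (fun n => μ {ω | opNorm (R n ω - R' n ω) > ε}) atTop (nhds 0))
    (hS : ∀ ε : ℝ, 0 < ε →
      Tendsto (fun n => μ {ω | opNorm (S n ω - S' n ω) > ε}) atTop (nhds 0)) :
    ∀ ε : ℝ, 0 < ε →
      Tendsto (fun n => μ {ω |
          |kcitStat γ (P n ω) (Q n ω) (S n ω) (R n ω)
            - kcitStat γ (P' n ω) (Q' n ω) (S' n ω) (R' n ω)| > ε}) atTop (nhds 0) := by
  intro ε hε
  set C' : ℝ := |C| + 1 with hC'def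
  have hC'pos : (0:ℝ) < C' := by positivity
  have hCC' : C ≤ C' := (le_abs_self C).trans (by simp [hC'def])
  -- thresholds
  set δP : ℝ := ε/4 with hδPdef
  set δQ : ℝ := ε*γ/(4*C') with hδQdef
  set δS : ℝ := ε*γ^2/(4*C'^2) with hδSdef
  have hC'ne : C' ≠ 0 := ne_of_gt hC'pos
  have hγne : γ ≠ 0 := ne_of_gt hγ
  have hδP : 0 < δP := by positivity
  have hδQ : 0 < δQ := by positivity
  have hδS : 0 < δS := by positivity
  clear_value C' δP δQ δS
  have TP := hP δP hδP
  have TQ := hQ δQ hδQ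
  have TS := hS δS hδS
  have TR := hR δQ hδQ
  have hupper : ∀ n, μ {ω |
      |kcitStat γ (P n ω) (Q n ω) (S n ω) (R n ω)
        - kcitStat γ (P' n ω) (Q' n ω) (S' n ω) (R' n ω)| > ε}
      ≤ μ {ω | opNorm (P n ω - P' n ω) > δP} + (μ {ω | opNorm (Q n ω - Q' n ω) > δQ}
        + (μ {ω | opNorm (S n ω - S' n ω) > δS} + μ {ω | opNorm (R n ω - R' n ω) > δQ})) := by
    intro n
    have hae : ∀ᵐ ω ∂μ, ((S n ω).PosSemidef ∧ (S' n ω).PosSemidef) ∧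
        (opNorm (Q' n ω) ≤ C ∧ opNorm (R n ω) ≤ C ∧ opNorm (R' n ω) ≤ C) :=
      (hS_psd n).and (hbdd n)
    have hbad : μ {ω | ¬ (((S n ω).PosSemidef ∧ (S' n ω).PosSemidef) ∧
        (opNorm (Q' n ω) ≤ C ∧ opNorm (R n ω) ≤ C ∧ opNorm (R' n ω) ≤ C))} = 0 :=
      ae_iff.mp hae
    have hsub : {ω |
        |kcitStat γ (P n ω) (Q n ω) (S n ω) (R n ω)
          - kcitStat γ (P' n ω) (Q' n ω) (S' n ω) (R' n ω)| > ε}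
        ⊆ {ω | ¬ (((S n ω).PosSemidef ∧ (S' n ω).PosSemidef) ∧
            (opNorm (Q' n ω) ≤ C ∧ opNorm (R n ω) ≤ C ∧ opNorm (R' n ω) ≤ C))}
          ∪ ({ω | opNorm (P n ω - P' n ω) > δP} ∪ ({ω | opNorm (Q n ω - Q' n ω) > δQ}
          ∪ ({ω | opNorm (S n ω - S' n ω) > δS} ∪ {ω | opNorm (R n ω - R' n ω) > δQ}))) := by
      intro ω hω
      simp only [Set.mem_setOf_eq] at hω
      by_contra hcon
      simp only [Set.mem_union, Set.mem_setOf_eq, not_or, not_lt, not_not] at hcon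
      obtain ⟨⟨⟨hSpsd, hS'psd⟩, hQ'b, hRb, _⟩, hPle, hQle, hSle, hRle⟩ := hcon
      have hQ'b' : opNorm (Q' n ω) ≤ C' := hQ'b.trans hCC'
      have hRb' : opNorm (R n ω) ≤ C' := hRb.trans hCC'
      have hkey := kcit_bound (C := C') hγ (P n ω) (P' n ω) (Q n ω) (Q' n ω)
        (R n ω) (R' n ω) (S n ω) (S' n ω) hSpsd hS'psd hQ'b' hRb'
      rw [← opNorm_eq_l2, ← opNorm_eq_l2, ← opNorm_eq_l2, ← opNorm_eq_l2] at hkey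
      have e2 : (C'/γ) * opNorm (Q n ω - Q' n ω) ≤ ε/4 := by
        have := mul_le_mul_of_nonneg_left hQle (le_of_lt (by positivity : (0:ℝ) < C'/γ))
        refine this.trans (le_of_eq ?_)
        rw [hδQdef]
        field_simp
      have e3 : (C'^2/γ^2) * opNorm (S n ω - S' n ω) ≤ ε/4 := by
        have := mul_le_mul_of_nonneg_left hSle (le_of_lt (by positivity : (0:ℝ) < C'^2/γ^2))
        refine this.trans (le_of_eq ?_)
        rw [hδSdef]
        field_simp
      have e4 : (C'/γ) * opNorm (R n ω - R' n ω) ≤ ε/4 := by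
        have := mul_le_mul_of_nonneg_left hRle (le_of_lt (by positivity : (0:ℝ) < C'/γ))
        refine this.trans (le_of_eq ?_)
        rw [hδQdef]
        field_simp
      have : |kcitStat γ (P n ω) (Q n ω) (S n ω) (R n ω)
          - kcitStat γ (P' n ω) (Q' n ω) (S' n ω) (R' n ω)| ≤ ε := by
        refine hkey.trans ?_
        have : δP = ε/4 := hδPdef
        linarith
      linarith
    calc μ {ω |
        |kcitStat γ (P n ω) (Q n ω) (S n ω) (R n ω)
          - kcitStat γ (P' n ω) (Q' n ω) (S' n ω) (R' n ω)| > ε}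
        ≤ μ ({ω | ¬ (((S n ω).PosSemidef ∧ (S' n ω).PosSemidef) ∧
            (opNorm (Q' n ω) ≤ C ∧ opNorm (R n ω) ≤ C ∧ opNorm (R' n ω) ≤ C))}
          ∪ ({ω | opNorm (P n ω - P' n ω) > δP} ∪ ({ω | opNorm (Q n ω - Q' n ω) > δQ}
          ∪ ({ω | opNorm (S n ω - S' n ω) > δS} ∪ {ω | opNorm (R n ω - R' n ω) > δQ})))) :=
          measure_mono hsub
      _ ≤ μ {ω | ¬ (((S n ω).PosSemidef ∧ (S' n ω).PosSemidef) ∧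
            (opNorm (Q' n ω) ≤ C ∧ opNorm (R n ω) ≤ C ∧ opNorm (R' n ω) ≤ C))}
          + μ ({ω | opNorm (P n ω - P' n ω) > δP} ∪ ({ω | opNorm (Q n ω - Q' n ω) > δQ}
          ∪ ({ω | opNorm (S n ω - S' n ω) > δS} ∪ {ω | opNorm (R n ω - R' n ω) > δQ}))) :=
          measure_union_le _ _
      _ = μ ({ω | opNorm (P n ω - P' n ω) > δP} ∪ ({ω | opNorm (Q n ω - Q' n ω) > δQ}
          ∪ ({ω | opNorm (S n ω - S' n ω) > δS} ∪ {ω | opNorm (R n ω - R' n ω) > δQ}))) := by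
          rw [hbad, zero_add]
      _ ≤ μ {ω | opNorm (P n ω - P' n ω) > δP} + μ ({ω | opNorm (Q n ω - Q' n ω) > δQ}
          ∪ ({ω | opNorm (S n ω - S' n ω) > δS} ∪ {ω | opNorm (R n ω - R' n ω) > δQ})) :=
          measure_union_le _ _
      _ ≤ μ {ω | opNorm (P n ω - P' n ω) > δP} + (μ {ω | opNorm (Q n ω - Q' n ω) > δQ}
          + μ ({ω | opNorm (S n ω - S' n ω) > δS} ∪ {ω | opNorm (R n ω - R' n ω) > δQ})) := by
          gcongr
          exact measure_union_le _ _
      _ ≤ μ {ω | opNorm (P n ω - P' n ω) > δP} + (μ {ω | opNorm (Q n ω - Q' n ω) > δQ}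
          + (μ {ω | opNorm (S n ω - S' n ω) > δS} + μ {ω | opNorm (R n ω - R' n ω) > δQ})) := by
          gcongr
          exact measure_union_le _ _
  have hsum : Tendsto (fun n => μ {ω | opNorm (P n ω - P' n ω) > δP}
      + (μ {ω | opNorm (Q n ω - Q' n ω) > δQ}
      + (μ {ω | opNorm (S n ω - S' n ω) > δS} + μ {ω | opNorm (R n ω - R' n ω) > δQ})))
      atTop (nhds 0) := by
    have := TP.add (TQ.add (TS.add TR))
    simpa using this
  exact tendsto_of_tendsto_of_tendsto_of_le_of_le tendsto_const_nhds hsum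
    (fun n => zero_le) hupper
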